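/- Consider a semidefinite network game with payoff operators Φ_{ij}, and for a profile X of density matrices let W(X) = Σ_{j=1}^N p_j(X). Then for every player i ∈ [N], all Hermitian matrices X_i, Y_i ∈ M_{n_i}(ℂ), and every profile X of density matrices, one has W(X_i, X_{-i}) − W(Y_i, X_{-i}) = Σ_{ℓ ∈ N(i)} ⟨X_ℓ, (Φ_{iℓ}† + Φ_{ℓi})(X_i − Y_i)⟩, where Φ_{iℓ}† is the adjoint of Φ_{iℓ} with respect to the Frobenius inner product and (X_i, X_{-i}) denotes the profile X with its i-th component replaced by X_i. -/

import Mathlib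

open Matrix Kronecker BigOperators ComplexOrder

noncomputable section

/-- Frobenius inner product `⟨A, B⟩ = tr(Aᴴ B)`. -/
def frob {α : Type*} [Fintype α] (A B : Matrix α α ℂ) : ℂ := (Aᴴ * B).trace

/-- A density matrix: positive semidefinite with trace one. -/
def IsDensity {α : Type*} [Fintype α] (X : Matrix α α ℂ) : Prop :=
  X.PosSemidef ∧ X.trace = 1

/-- The payoff operator `Φ_R` associated with a payoff matrix `R`,
defined entrywise by `Φ_R(T)_{a,b} = Σ_{c,d} R_{(a,c),(b,d)} T_{d,c}`. -/
def payoffOp {k m : ℕ} (R : Matrix (Fin k × Fin m) (Fin k × Fin m) ℂ)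
    (T : Matrix (Fin m) (Fin m) ℂ) : Matrix (Fin k) (Fin k) ℂ :=
  Matrix.of fun a b => ∑ c, ∑ d, R (a, c) (b, d) * T d c

/-- The payoff of player `i`: `p_i(X) = Σ_{j ∈ N(i)} ⟨R_{ij}, X_i ⊗ X_j⟩` (a real number). -/
def payoff {N : ℕ} (G : SimpleGraph (Fin N)) [DecidableRel G.Adj] (n : Fin N → ℕ)
    (R : ∀ i j : Fin N, Matrix (Fin (n i) × Fin (n j)) (Fin (n i) × Fin (n j)) ℂ)
    (X : ∀ i, Matrix (Fin (n i)) (Fin (n i)) ℂ) (i : Fin N) : ℝ :=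
  (∑ j ∈ G.neighborFinset i, frob (R i j) ((X i) ⊗ₖ (X j))).re

/-- `Φ_i(X) = Σ_{j ∈ N(i)} Φ_{ij}(X_j)`. -/
def Phi {N : ℕ} (G : SimpleGraph (Fin N)) [DecidableRel G.Adj] (n : Fin N → ℕ)
    (R : ∀ i j : Fin N, Matrix (Fin (n i) × Fin (n j)) (Fin (n i) × Fin (n j)) ℂ)
    (X : ∀ i, Matrix (Fin (n i)) (Fin (n i)) ℂ) (i : Fin N) :
    Matrix (Fin (n i)) (Fin (n i)) ℂ :=
  ∑ j ∈ G.neighborFinset i, payoffOp (R i j) (X j)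

/-- Nash equilibrium (best-response) condition for a strategy profile. -/
def IsNash {N : ℕ} (G : SimpleGraph (Fin N)) [DecidableRel G.Adj] (n : Fin N → ℕ)
    (R : ∀ i j : Fin N, Matrix (Fin (n i) × Fin (n j)) (Fin (n i) × Fin (n j)) ℂ)
    (X : ∀ i, Matrix (Fin (n i)) (Fin (n i)) ℂ) : Prop :=
  ∀ i, ∀ S : Matrix (Fin (n i)) (Fin (n i)) ℂ, IsDensity S →
    payoff G n R (Function.update X i S) i ≤ payoff G n R X i

/-- The largest eigenvalue of a Hermitian matrix (junk value `0` otherwise). -/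
def lamMax {k : ℕ} (A : Matrix (Fin k) (Fin k) ℂ) : ℝ :=
  if h : A.IsHermitian then ⨆ i, h.eigenvalues i else 0


lemma frob_star {α : Type*} [Fintype α] (A B : Matrix α α ℂ) :
    frob B A = starRingEnd ℂ (frob A B) := by
  have : (starRingEnd ℂ) (Aᴴ * B).trace = ((Aᴴ * B)ᴴ).trace := (Matrix.trace_conjTranspose _).symm
  rw [frob, frob, this, Matrix.conjTranspose_mul, Matrix.conjTranspose_conjTranspose]

lemma frob_add {α : Type*} [Fintype α] (A B C : Matrix α α ℂ) :
    frob A (B + C) = frob A B + frob A C := by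
  simp [frob, Matrix.mul_add]

lemma frob_sub {α : Type*} [Fintype α] (A B C : Matrix α α ℂ) :
    frob A (B - C) = frob A B - frob A C := by
  simp [frob, Matrix.mul_sub]

lemma frob_kron {k m : ℕ} (R : Matrix (Fin k × Fin m) (Fin k × Fin m) ℂ)
    (hRh : R.IsHermitian) (S : Matrix (Fin k) (Fin k) ℂ) (hS : S.IsHermitian)
    (T : Matrix (Fin m) (Fin m) ℂ) :
    frob R (S ⊗ₖ T) = frob S (payoffOp R T) := by
  have hR' : ∀ p q, star (R q p) = R p q := fun p q => by
    have := congrFun (congrFun hRh p) q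
    simpa [Matrix.conjTranspose_apply] using this
  have hS' : ∀ a b, star (S b a) = S a b := fun a b => by
    have := congrFun (congrFun hS a) b
    simpa [Matrix.conjTranspose_apply] using this
  simp only [frob, payoffOp, Matrix.trace, Matrix.diag, Matrix.mul_apply,
    Matrix.conjTranspose_apply, Matrix.kroneckerMap_apply, Matrix.of_apply,
    Fintype.sum_prod_type, Finset.mul_sum, Finset.sum_mul, hR', hS']
  conv_rhs => rw [Finset.sum_comm]
  refine Finset.sum_congr rfl fun u _ => ?_
  rw [Finset.sum_comm]
  refine Finset.sum_congr rfl fun b _ =>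
    Finset.sum_congr rfl fun c _ => Finset.sum_congr rfl fun d _ => by ring

lemma kron_sub_left {k m : ℕ} (A B : Matrix (Fin k) (Fin k) ℂ) (C : Matrix (Fin m) (Fin m) ℂ) :
    (A - B) ⊗ₖ C = A ⊗ₖ C - B ⊗ₖ C := by
  ext ⟨a, c⟩ ⟨b, d⟩
  simp [Matrix.kroneckerMap_apply, sub_mul]

lemma kron_sub_right {k m : ℕ} (A : Matrix (Fin k) (Fin k) ℂ) (B C : Matrix (Fin m) (Fin m) ℂ) :
    A ⊗ₖ (B - C) = A ⊗ₖ B - A ⊗ₖ C := by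
  ext ⟨a, c⟩ ⟨b, d⟩
  simp [Matrix.kroneckerMap_apply, mul_sub]


/-- with `W(X) = Σ_j p_j(X)`, for every player `i`, Hermitian `X_i, Y_i` and
profile of density matrices `X`,
`W(X_i, X_{-i}) − W(Y_i, X_{-i}) = Σ_{ℓ ∈ N(i)} ⟨X_ℓ, (Φ_{iℓ}† + Φ_{ℓi})(X_i − Y_i)⟩`.
Here `A i ℓ` denotes the Frobenius adjoint `Φ_{iℓ}†` of the payoff operator `Φ_{iℓ}`. -/
theorem stmt13 {N : ℕ} (G : SimpleGraph (Fin N)) [DecidableRel G.Adj] (n : Fin N → ℕ)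
    (hn : ∀ i, 0 < n i)
    (R : ∀ i j : Fin N, Matrix (Fin (n i) × Fin (n j)) (Fin (n i) × Fin (n j)) ℂ)
    (hR : ∀ i j, G.Adj i j → (R i j).IsHermitian)
    (A : ∀ i j : Fin N,
      Matrix (Fin (n i)) (Fin (n i)) ℂ →ₗ[ℂ] Matrix (Fin (n j)) (Fin (n j)) ℂ)
    (hA : ∀ (i j : Fin N) (S : Matrix (Fin (n i)) (Fin (n i)) ℂ)
      (T : Matrix (Fin (n j)) (Fin (n j)) ℂ), frob (A i j S) T = frob S (payoffOp (R i j) T)) :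
    ∀ (i : Fin N) (Xi Yi : Matrix (Fin (n i)) (Fin (n i)) ℂ),
      Xi.IsHermitian → Yi.IsHermitian →
      ∀ X : ∀ j, Matrix (Fin (n j)) (Fin (n j)) ℂ, (∀ j, IsDensity (X j)) →
        (∑ j, payoff G n R (Function.update X i Xi) j)
          - (∑ j, payoff G n R (Function.update X i Yi) j)
        = (∑ l ∈ G.neighborFinset i,
            frob (X l) (A i l (Xi - Yi) + payoffOp (R l i) (Xi - Yi))).re := by

  intro i Xi Yi hXi hYi X hX
  classical
  set S := Xi - Yi with hSdef
  have hSh : S.IsHermitian := hXi.sub hYi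
  set U : ∀ j, Matrix (Fin (n j)) (Fin (n j)) ℂ := Function.update X i Xi with hUdef
  set V : ∀ j, Matrix (Fin (n j)) (Fin (n j)) ℂ := Function.update X i Yi with hVdef
  have hUi : U i = Xi := Function.update_self i Xi X
  have hVi : V i = Yi := Function.update_self i Yi X
  have hUk : ∀ k, k ≠ i → U k = X k := fun k hk => Function.update_of_ne hk _ _
  have hVk : ∀ k, k ≠ i → V k = X k := fun k hk => Function.update_of_ne hk _ _
  have hmem : ∀ {l}, l ∈ G.neighborFinset i → G.Adj i l :=
    fun {l} h => (G.mem_neighborFinset _ _).1 h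
  -- off-diagonal players
  have hoff : ∀ j, j ≠ i →
      (∑ k ∈ G.neighborFinset j, frob (R j k) (U j ⊗ₖ U k))
      - (∑ k ∈ G.neighborFinset j, frob (R j k) (V j ⊗ₖ V k))
      = (if j ∈ G.neighborFinset i then frob (R j i) (X j ⊗ₖ S) else 0) := by
    intro j hj
    rw [← Finset.sum_sub_distrib]
    have step : ∀ k ∈ G.neighborFinset j,
        frob (R j k) (U j ⊗ₖ U k) - frob (R j k) (V j ⊗ₖ V k)
        = if k = i then frob (R j i) (X j ⊗ₖ S) else 0 := by
      intro k hk
      by_cases hki : k = i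
      · subst hki
        rw [hUk j hj, hVk j hj, hUi, hVi, if_pos rfl, hSdef,
          kron_sub_right, frob_sub]
      · rw [hUk j hj, hVk j hj, hUk k hki, hVk k hki, sub_self, if_neg hki]
    rw [Finset.sum_congr rfl step, Finset.sum_ite_eq' (G.neighborFinset j) i]
    simp only [show (i ∈ G.neighborFinset j) ↔ (j ∈ G.neighborFinset i) by
      simp [SimpleGraph.mem_neighborFinset, G.adj_comm]]
  -- player i
  have hdiag : (∑ k ∈ G.neighborFinset i, frob (R i k) (U i ⊗ₖ U k))
      - (∑ k ∈ G.neighborFinset i, frob (R i k) (V i ⊗ₖ V k))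
      = ∑ k ∈ G.neighborFinset i, frob (R i k) (S ⊗ₖ X k) := by
    rw [← Finset.sum_sub_distrib]
    refine Finset.sum_congr rfl fun k hk => ?_
    rw [hUi, hVi, hUk k (hmem hk).ne', hVk k (hmem hk).ne', hSdef,
      kron_sub_left, frob_sub]
  -- main complex identity
  have main : (∑ j, ∑ k ∈ G.neighborFinset j, frob (R j k) (U j ⊗ₖ U k))
      - (∑ j, ∑ k ∈ G.neighborFinset j, frob (R j k) (V j ⊗ₖ V k))
      = ∑ l ∈ G.neighborFinset i,
          (frob (R i l) (S ⊗ₖ X l) + frob (R l i) (X l ⊗ₖ S)) := by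
    rw [← Finset.sum_sub_distrib]
    rw [Fintype.sum_eq_add_sum_compl i]
    have h1 : ∀ j ∈ ({i}ᶜ : Finset (Fin N)),
        ((∑ k ∈ G.neighborFinset j, frob (R j k) (U j ⊗ₖ U k))
          - (∑ k ∈ G.neighborFinset j, frob (R j k) (V j ⊗ₖ V k)))
        = (if j ∈ G.neighborFinset i then frob (R j i) (X j ⊗ₖ S) else 0) := by
      intro j hj
      exact hoff j (by simpa using hj)
    rw [Finset.sum_congr rfl h1, hdiag, Finset.sum_ite_mem]
    have h2 : ({i}ᶜ : Finset (Fin N)) ∩ G.neighborFinset i = G.neighborFinset i := by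
      ext l
      simp only [Finset.mem_inter, Finset.mem_compl, Finset.mem_singleton,
        SimpleGraph.mem_neighborFinset, and_iff_right_iff_imp]
      exact fun h => h.ne'
    rw [h2, ← Finset.sum_add_distrib]
  -- assemble
  have lhs_eq : (∑ j, payoff G n R U j) - (∑ j, payoff G n R V j)
      = ((∑ j, ∑ k ∈ G.neighborFinset j, frob (R j k) (U j ⊗ₖ U k))
        - (∑ j, ∑ k ∈ G.neighborFinset j, frob (R j k) (V j ⊗ₖ V k))).re := by
    simp only [payoff, Complex.sub_re, Complex.re_sum]
  rw [lhs_eq, main, Complex.re_sum, Complex.re_sum]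
  refine Finset.sum_congr rfl fun l hl => ?_
  have hadj : G.Adj i l := hmem hl
  have hXl : (X l).IsHermitian := (hX l).1.1
  have e1 : frob (R i l) (S ⊗ₖ X l) = frob (A i l S) (X l) := by
    rw [frob_kron (R i l) (hR i l hadj) S hSh (X l), hA]
  have e2 : frob (R l i) (X l ⊗ₖ S) = frob (X l) (payoffOp (R l i) S) :=
    frob_kron (R l i) (hR l i hadj.symm) (X l) hXl S
  rw [e1, e2, frob_add, Complex.add_re, Complex.add_re]
  congr 1
  rw [frob_star]
  exact (Complex.conj_re _).symm


end
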